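/- Let l ∈ ℕ, p₁,…,p_l ∈ (0,1], y ∈ {0,1}^l, x ∈ 𝒳, and f* : {0,1}^l × 𝒳 → ℝ. Then the two forms of the propensity-scored multilabel loss coincide: Σ_{ℐ ⊆ {1,…,l}} f*(𝟙_ℐ, x) · (∏_{i ∈ ℐ} y_i/p_i) · ∏_{j ∉ ℐ} (1 − y_j/p_j) = (∏_{i ∈ I(y)} 1/p_i) · Σ_{𝒥 ⊆ I(y)} f*(𝟙_𝒥, x) · ∏_{j ∈ I(y) \ 𝒥} (p_j − 1), where both sums run over subsets of {1,…,l} and of I(y) respectively. -/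

import Mathlib

/-- The set of positive labels `I(y) = {i : yᵢ = 1}` of a label vector `y ∈ {0,1}^l`. -/
noncomputable def posSet {l : ℕ} (y : Fin l → ℝ) : Finset (Fin l) :=
  Finset.univ.filter (fun i => y i = 1)

/-- The indicator vector `𝟙_𝒥 ∈ {0,1}^l` of a subset `𝒥 ⊆ {1,…,l}`. -/
def indVec {l : ℕ} (J : Finset (Fin l)) : Fin l → ℝ := fun i => if i ∈ J then 1 else 0

/-- **Equivalence of the two forms of the propensity-scored multilabel loss.** For
`p i ∈ (0,1]`, `y ∈ {0,1}^l`, `x ∈ 𝒳` and any `f* : {0,1}^l × 𝒳 → ℝ`: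
`Σ_{ℐ ⊆ [l]} f*(𝟙_ℐ, x) · (∏_{i ∈ ℐ} yᵢ/pᵢ) · ∏_{j ∉ ℐ} (1 − yⱼ/pⱼ)
  = (∏_{i ∈ I(y)} 1/pᵢ) · Σ_{𝒥 ⊆ I(y)} f*(𝟙_𝒥, x) · ∏_{j ∈ I(y) \ 𝒥} (pⱼ − 1)`. -/
theorem ps_multilabel_two_forms
    {𝒳 : Type*} (l : ℕ) (p : Fin l → ℝ) (hp : ∀ i, p i ∈ Set.Ioc (0 : ℝ) 1)
    (y : Fin l → ℝ) (hy : ∀ i, y i = 0 ∨ y i = 1)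
    (x : 𝒳) (fstar : (Fin l → ℝ) → 𝒳 → ℝ) :
    ∑ I ∈ (Finset.univ : Finset (Fin l)).powerset,
        fstar (indVec I) x * (∏ i ∈ I, y i / p i) * ∏ j ∈ Finset.univ \ I, (1 - y j / p j)
      = (∏ i ∈ posSet y, (p i)⁻¹) *
          ∑ J ∈ (posSet y).powerset,
            fstar (indVec J) x * ∏ j ∈ posSet y \ J, (p j - 1) := by
  have hsub : (posSet y).powerset ⊆ (Finset.univ : Finset (Fin l)).powerset :=
    Finset.powerset_mono.mpr (Finset.subset_univ _)
  rw [← Finset.sum_subset hsub ?vanish]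
  case vanish =>
    intro I _ hI
    have : ¬ I ⊆ posSet y := by simpa [Finset.mem_powerset] using hI
    obtain ⟨i, hiI, hips⟩ := Finset.not_subset.mp this
    have hyi : y i = 0 := by
      rcases hy i with h | h
      · exact h
      · exact absurd (by simp [posSet, h]) hips
    rw [Finset.prod_eq_zero hiI (by simp [hyi])]
    ring
  rw [Finset.mul_sum]
  refine Finset.sum_congr rfl ?_
  intro J hJ
  have hJsub : J ⊆ posSet y := Finset.mem_powerset.mp hJ
  have hmemJ : ∀ i ∈ J, y i = 1 := fun i hi => by
    have := hJsub hi; simpa [posSet] using this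
  have hsplit : (Finset.univ : Finset (Fin l)) \ J
      = (posSet y \ J) ∪ (Finset.univ \ posSet y) := by
    ext j
    simp only [Finset.mem_sdiff, Finset.mem_union, Finset.mem_univ, true_and]
    constructor
    · intro hj
      by_cases h : j ∈ posSet y
      · exact Or.inl ⟨h, hj⟩
      · exact Or.inr h
    · rintro (⟨_, hj⟩ | hj)
      · exact hj
      · exact fun hc => hj (hJsub hc)
  have hdisj : Disjoint (posSet y \ J) (Finset.univ \ posSet y) := by
    refine Finset.disjoint_left.mpr ?_
    intro a ha hb
    exact (Finset.mem_sdiff.mp hb).2 (Finset.mem_sdiff.mp ha).1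
  have h1 : (∏ i ∈ J, y i / p i) = ∏ i ∈ J, (p i)⁻¹ := by
    refine Finset.prod_congr rfl fun i hi => ?_
    rw [hmemJ i hi, one_div]
  have h2 : (∏ j ∈ Finset.univ \ posSet y, (1 - y j / p j)) = 1 := by
    refine Finset.prod_eq_one fun j hj => ?_
    have : y j ≠ 1 := by
      have := (Finset.mem_sdiff.mp hj).2
      simpa [posSet] using this
    have hyj : y j = 0 := (hy j).resolve_right this
    simp [hyj]
  have h3 : (∏ j ∈ posSet y \ J, (1 - y j / p j))
      = (∏ j ∈ posSet y \ J, (p j - 1)) * ∏ j ∈ posSet y \ J, (p j)⁻¹ := by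
    rw [← Finset.prod_mul_distrib]
    refine Finset.prod_congr rfl fun j hj => ?_
    have hyj : y j = 1 := by
      have := (Finset.mem_sdiff.mp hj).1
      simpa [posSet] using this
    have hpj : p j ≠ 0 := ne_of_gt (hp j).1
    field_simp [hyj]
    rw [hyj]
  have h4 : (∏ i ∈ J, (p i)⁻¹) * ∏ j ∈ posSet y \ J, (p j)⁻¹
      = ∏ i ∈ posSet y, (p i)⁻¹ := by
    rw [mul_comm, Finset.prod_sdiff hJsub]
  rw [hsplit, Finset.prod_union hdisj, h1, h2, h3, mul_one]
  calc fstar (indVec J) x * (∏ i ∈ J, (p i)⁻¹) *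
        ((∏ j ∈ posSet y \ J, (p j - 1)) * ∏ j ∈ posSet y \ J, (p j)⁻¹)
      = ((∏ i ∈ J, (p i)⁻¹) * ∏ j ∈ posSet y \ J, (p j)⁻¹) *
        (fstar (indVec J) x * ∏ j ∈ posSet y \ J, (p j - 1)) := by ring
    _ = (∏ i ∈ posSet y, (p i)⁻¹) *
        (fstar (indVec J) x * ∏ j ∈ posSet y \ J, (p j - 1)) := by rw [h4]
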